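/- Let n ≥ 4k³ and let 𝓕 ⊆ ([n] choose k) be a family such that |A∩B| + |B∩C| + |C∩A| ≥ 3 for all A, B, C ∈ 𝓕. Then |𝓕| = C(n−1,k−1) is attained: the family of all k-subsets containing a fixed element satisfies the condition, and no larger family does. -/

import Mathlib

open Finset

/-- `d A B C = |A∩B| + |B∩C| + |C∩A|`. -/
def dd (A B C : Finset ℕ) : ℕ := (A ∩ B).card + (B ∩ C).card + (C ∩ A).card

lemma arith_aux (n k : ℕ) (hk : 3 ≤ k) (hn : 4 * k ^ 3 ≤ n) :
    (2 * k).choose 3 * n.choose (k - 3) ≤ (n - 1).choose (k - 1) := by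
  have hkk : k ≤ k ^ 3 := Nat.le_self_pow (by norm_num) k
  set m := k - 3 with hm
  have hk1 : k - 1 = m + 2 := by omega
  rw [hk1]
  have h1 : (n - 1).choose (m + 1) * (m + 1) = (n - 1).choose m * ((n - 1) - m) :=
    Nat.choose_succ_right_eq _ _
  have h2 : (n - 1).choose (m + 2) * (m + 2) = (n - 1).choose (m + 1) * ((n - 1) - (m + 1)) :=
    Nat.choose_succ_right_eq _ _
  have hC : n.choose m ≤ 2 * (n - 1).choose m := by
    rcases Nat.eq_zero_or_pos m with h0 | h0
    · simp [h0]
    · have hpas : n.choose m = (n - 1).choose (m - 1) + (n - 1).choose m := by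
        have h := Nat.choose_succ_succ (n - 1) (m - 1)
        have e1 : n - 1 + 1 = n := by omega
        have e2 : m - 1 + 1 = m := by omega
        simp only [Nat.succ_eq_add_one] at h
        rw [e1, e2] at h
        exact h
      have hmono : (n - 1).choose (m - 1) ≤ (n - 1).choose m := by
        have hh : m - 1 < (n - 1) / 2 := by omega
        have := Nat.choose_le_succ_of_lt_half_left (n := n - 1) hh
        have hm' : (m - 1) + 1 = m := by omega
        rwa [hm'] at this
      omega
  refine Nat.le_of_mul_le_mul_right ?_ (show 0 < (m + 1) * (m + 2) by positivity)
  have hRHS : (n - 1).choose (m + 2) * ((m + 1) * (m + 2))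
      = (n - 1).choose m * (((n - 1) - m) * ((n - 1) - (m + 1))) := by
    calc (n - 1).choose (m + 2) * ((m + 1) * (m + 2))
        = ((n - 1).choose (m + 2) * (m + 2)) * (m + 1) := by ring
      _ = ((n - 1).choose (m + 1) * (m + 1)) * ((n - 1) - (m + 1)) := by rw [h2]; ring
      _ = (n - 1).choose m * (((n - 1) - m) * ((n - 1) - (m + 1))) := by rw [h1]; ring
  rw [hRHS]
  have hkey : (2 * k).choose 3 * (2 * (m + 1) * (m + 2)) ≤ ((n - 1) - m) * ((n - 1) - (m + 1)) := by
    have hc : (2 * k).choose 3 ≤ (2 * k) ^ 3 := Nat.choose_le_pow _ _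
    have ha : 3 * k ^ 3 ≤ (n - 1) - m := by omega
    have hb : 3 * k ^ 3 ≤ (n - 1) - (m + 1) := by omega
    calc (2 * k).choose 3 * (2 * (m + 1) * (m + 2))
        ≤ (2 * k) ^ 3 * (2 * k * k) := by
          apply Nat.mul_le_mul hc
          have h1 : m + 1 ≤ k := by omega
          have h2 : m + 2 ≤ k := by omega
          exact Nat.mul_le_mul (Nat.mul_le_mul_left 2 h1) h2
      _ = 16 * (k * k * k ^ 3) := by ring
      _ ≤ (9 * k) * (k * k * k ^ 3) := by
          apply Nat.mul_le_mul_right; omega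
      _ = (3 * k ^ 3) * (3 * (k * k * k)) := by ring
      _ = (3 * k ^ 3) * (3 * k ^ 3) := by ring
      _ ≤ ((n - 1) - m) * ((n - 1) - (m + 1)) := Nat.mul_le_mul ha hb
  calc (2 * k).choose 3 * n.choose m * ((m + 1) * (m + 2))
      ≤ (2 * k).choose 3 * (2 * (n - 1).choose m) * ((m + 1) * (m + 2)) := by
        exact Nat.mul_le_mul_right _ (Nat.mul_le_mul_left _ hC)
    _ = (n - 1).choose m * ((2 * k).choose 3 * (2 * (m + 1) * (m + 2))) := by ring
    _ ≤ (n - 1).choose m * (((n - 1) - m) * ((n - 1) - (m + 1))) :=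
        Nat.mul_le_mul_left _ hkey

theorem stmt10 (n k : ℕ) (hk : 1 ≤ k) (hn : 4 * k ^ 3 ≤ n) :
    (∀ A ∈ ((Finset.Icc 1 n).powersetCard k).filter (fun F => 1 ∈ F),
      ∀ B ∈ ((Finset.Icc 1 n).powersetCard k).filter (fun F => 1 ∈ F),
      ∀ C ∈ ((Finset.Icc 1 n).powersetCard k).filter (fun F => 1 ∈ F), 3 ≤ dd A B C) ∧
    (((Finset.Icc 1 n).powersetCard k).filter (fun F => 1 ∈ F)).card = (n - 1).choose (k - 1) ∧
    (∀ 𝓕 : Finset (Finset ℕ), 𝓕 ⊆ (Finset.Icc 1 n).powersetCard k →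
      (∀ A ∈ 𝓕, ∀ B ∈ 𝓕, ∀ C ∈ 𝓕, 3 ≤ dd A B C) → 𝓕.card ≤ (n - 1).choose (k - 1)) := by
  have hkk : k ≤ k ^ 3 := Nat.le_self_pow (by norm_num) k
  have hn0 : 0 < n := by omega
  refine ⟨?_, ?_, ?_⟩
  · -- part 1
    intro A hA B hB C hC
    simp only [mem_filter] at hA hB hC
    have h1 : 1 ≤ (A ∩ B).card := card_pos.2 ⟨1, mem_inter.2 ⟨hA.2, hB.2⟩⟩
    have h2 : 1 ≤ (B ∩ C).card := card_pos.2 ⟨1, mem_inter.2 ⟨hB.2, hC.2⟩⟩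
    have h3 : 1 ≤ (C ∩ A).card := card_pos.2 ⟨1, mem_inter.2 ⟨hC.2, hA.2⟩⟩
    unfold dd; omega
  · -- part 2
    have hbij : (((Finset.Icc 1 n).powersetCard k).filter (fun F => 1 ∈ F)).card
        = (((Finset.Icc 1 n).erase 1).powersetCard (k - 1)).card := by
      refine Finset.card_bij' (fun F _ => F.erase 1) (fun G _ => insert 1 G) ?_ ?_ ?_ ?_
      · intro F hF
        simp only [mem_filter, mem_powersetCard] at hF
        rw [mem_powersetCard]
        exact ⟨erase_subset_erase _ hF.1.1, by rw [card_erase_of_mem hF.2, hF.1.2]⟩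
      · intro G hG
        rw [mem_powersetCard] at hG
        have h1G : 1 ∉ G := fun h => (notMem_erase 1 _) (hG.1 h)
        simp only [mem_filter, mem_powersetCard]
        refine ⟨⟨?_, ?_⟩, mem_insert_self 1 G⟩
        · intro x hx
          rcases mem_insert.1 hx with h | h
          · subst h; simp [mem_Icc]; omega
          · exact (erase_subset _ _) (hG.1 h)
        · rw [card_insert_of_notMem h1G, hG.2]; omega
      · intro F hF
        simp only [mem_filter] at hF
        exact insert_erase hF.2
      · intro G hG
        rw [mem_powersetCard] at hG
        have h1G : 1 ∉ G := fun h => (notMem_erase 1 _) (hG.1 h)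
        exact erase_insert h1G
    rw [hbij, card_powersetCard, card_erase_of_mem (by simp [mem_Icc]; omega),
      Nat.card_Icc]
    congr 1
  · -- part 3
    intro 𝓕 h𝓕 hdd
    have hmem : ∀ F ∈ 𝓕, F ⊆ Finset.Icc 1 n ∧ F.card = k := by
      intro F hF
      have := h𝓕 hF
      rwa [mem_powersetCard] at this
    by_cases hint : ∀ A ∈ 𝓕, ∀ B ∈ 𝓕, ¬ Disjoint A B
    · -- intersecting case: EKR
      set e : ℕ → Fin n := fun x => ⟨(x - 1) % n, Nat.mod_lt _ hn0⟩ with he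
      have heinj : Set.InjOn e (Finset.Icc 1 n) := by
        intro x hx y hy hxy
        simp only [Finset.coe_Icc, Set.mem_Icc] at hx hy
        have hx' : x - 1 < n := by omega
        have hy' : y - 1 < n := by omega
        have : (x - 1) % n = (y - 1) % n := congrArg Fin.val hxy
        rw [Nat.mod_eq_of_lt hx', Nat.mod_eq_of_lt hy'] at this
        omega
      set 𝒜 : Finset (Finset (Fin n)) := 𝓕.image (fun F => F.image e) with h𝒜
      have hcard : 𝒜.card = 𝓕.card := by
        apply card_image_of_injOn
        intro F hF G hG hFG
        have hFs := (hmem F hF).1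
        have hGs := (hmem G hG).1
        have hFG' : F.image e = G.image e := hFG
        apply Finset.Subset.antisymm
        · intro x hx
          have : e x ∈ G.image e := by rw [← hFG']; exact mem_image_of_mem e hx
          obtain ⟨y, hy, hxy⟩ := mem_image.1 this
          rwa [heinj (hGs hy) (hFs hx) hxy] at hy
        · intro x hx
          have : e x ∈ F.image e := by rw [hFG']; exact mem_image_of_mem e hx
          obtain ⟨y, hy, hxy⟩ := mem_image.1 this
          rwa [heinj (hFs hy) (hGs hx) hxy] at hy
      have hsized : (𝒜 : Set (Finset (Fin n))).Sized k := by
        intro S hS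
        obtain ⟨F, hF, rfl⟩ := mem_image.1 (by exact_mod_cast hS)
        rw [card_image_of_injOn (heinj.mono (by exact_mod_cast (hmem F hF).1))]
        exact (hmem F hF).2
      have hinter : (𝒜 : Set (Finset (Fin n))).Intersecting := by
        intro S hS T hT
        obtain ⟨F, hF, rfl⟩ := mem_image.1 (by exact_mod_cast hS)
        obtain ⟨G, hG, rfl⟩ := mem_image.1 (by exact_mod_cast hT)
        have := hint F hF G hG
        rw [Finset.not_disjoint_iff] at this ⊢
        obtain ⟨x, hxF, hxG⟩ := this
        exact ⟨e x, mem_image_of_mem e hxF, mem_image_of_mem e hxG⟩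
      have h3 : k ≤ n / 2 := by
        rw [Nat.le_div_iff_mul_le (by norm_num)]
        omega
      have := Finset.erdos_ko_rado hinter hsized h3
      omega
    · -- non-intersecting case
      push_neg at hint
      obtain ⟨A, hA, B, hB, hAB⟩ := hint
      have hAcard := (hmem A hA).2
      have hBcard := (hmem B hB).2
      have hk3 : 3 ≤ k := by
        have := hdd A hA B hB A hA
        unfold dd at this
        rw [inter_self] at this
        have h0 : (A ∩ B).card = 0 := by
          rw [card_eq_zero, ← disjoint_iff_inter_eq_empty]; exact hAB
        have h0' : (B ∩ A).card = 0 := by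
          rw [card_eq_zero, ← disjoint_iff_inter_eq_empty]; exact hAB.symm
        omega
      have hcut : ∀ C ∈ 𝓕, 3 ≤ (C ∩ (A ∪ B)).card := by
        intro C hC
        have hd := hdd A hA B hB C hC
        unfold dd at hd
        have h0 : (A ∩ B).card = 0 := by
          rw [card_eq_zero, ← disjoint_iff_inter_eq_empty]; exact hAB
        have hsplit : (C ∩ (A ∪ B)).card = (C ∩ A).card + (C ∩ B).card := by
          rw [inter_union_distrib_left]
          exact card_union_of_disjoint (disjoint_of_subset_left inter_subset_right
            (disjoint_of_subset_right inter_subset_right hAB))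
        rw [inter_comm B C] at hd
        omega
      -- injection into pairs
      have hcard : 𝓕.card ≤ (((A ∪ B).powersetCard 3) ×ˢ
          ((Finset.Icc 1 n).powersetCard (k - 3))).card := by
        classical
        set f : Finset ℕ → Finset ℕ := fun C =>
          if h : 3 ≤ (C ∩ (A ∪ B)).card then
            Classical.choose (Finset.exists_subset_card_eq h) else ∅ with hf
        have hfspec : ∀ C ∈ 𝓕, f C ⊆ C ∩ (A ∪ B) ∧ (f C).card = 3 := by
          intro C hC
          have h := hcut C hC
          rw [hf]
          simp only [h, dif_pos]
          exact Classical.choose_spec (Finset.exists_subset_card_eq h)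
        apply Finset.card_le_card_of_injOn (fun C => (f C, C \ f C))
        · intro C hC
          obtain ⟨hsub, hcard3⟩ := hfspec C hC
          rw [Finset.mem_coe, Finset.mem_product]
          constructor
          · rw [mem_powersetCard]
            exact ⟨hsub.trans inter_subset_right, hcard3⟩
          · rw [mem_powersetCard]
            refine ⟨(sdiff_subset).trans (hmem C hC).1, ?_⟩
            rw [card_sdiff_of_subset (hsub.trans inter_subset_left), hcard3, (hmem C hC).2]
        · intro C hC D hD hCD
          simp only [Prod.mk.injEq] at hCD
          have h1 : f C = f D := hCD.1
          have hCrec : C = f C ∪ (C \ f C) :=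
            (union_sdiff_of_subset ((hfspec C hC).1.trans inter_subset_left)).symm
          have hDrec : D = f D ∪ (D \ f D) :=
            (union_sdiff_of_subset ((hfspec D hD).1.trans inter_subset_left)).symm
          conv_lhs => rw [hCrec]
          conv_rhs => rw [hDrec]
          rw [hCD.2, h1]
      rw [Finset.card_product, card_powersetCard, card_powersetCard,
        Nat.card_Icc] at hcard
      have hUcard : (A ∪ B).card = 2 * k := by
        rw [card_union_of_disjoint hAB, hAcard, hBcard]; omega
      rw [hUcard] at hcard
      have : n + 1 - 1 = n := by omega
      rw [this] at hcard
      exact hcard.trans (arith_aux n k hk3 hn)
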